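/- arXiv:math/0605480 — 10 statements merged into one kernel-verified Lean document; each statement's English description precedes it below -/
import Mathlib

section
/- For all f, g ∈ 𝒮, the function α ↦ ⟪f(α), g(α)⟫ is locally integrable on ℝ, and there exists α₀ > 0 such that ⟪f(α+1), g(α+1)⟫ = ⟪f(α), g(α)⟫ for almost every α ≥ α₀. Consequently, the limit ⟨f,g⟩ = lim_{m→∞, m ∈ ℕ} ∫_m^{m+1} ⟪f(α), g(α)⟫ dα exists. -/
open MeasureTheory Filter Topology

noncomputable section

variable {H₀ : Type*} [NormedAddCommGroup H₀] [InnerProductSpace ℂ H₀] [CompleteSpace H₀]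

/-- `f : ℝ → H₀` is locally square-integrable: strongly measurable and
`∫_K ‖f α‖² dα < ∞` for every compact `K ⊆ ℝ`. -/
def LocSqInt (f : ℝ → H₀) : Prop :=
  StronglyMeasurable f ∧
    ∀ K : Set ℝ, IsCompact K → IntegrableOn (fun α => ‖f α‖ ^ 2) K volume

/-- The stable sections `𝒮` (with respect to the family `V` of isometries playing the
role of right multiplication by the unit vector `e ∈ E₁`). -/
def StableSection (V : ℝ → H₀ →ₗᵢ[ℂ] H₀) (f : ℝ → H₀) : Prop :=
  LocSqInt f ∧ ∃ α₀ > (0 : ℝ), ∀ᵐ α ∂(volume : Measure ℝ), α₀ ≤ α → f (α + 1) = V α (f α)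

/-- For `f, g ∈ 𝒮` the pointwise inner product is locally integrable and eventually
`1`-periodic a.e.; consequently `⟨f,g⟩ = lim_{m→∞} ∫_m^{m+1} ⟪f(α), g(α)⟫ dα` exists. -/
theorem innerSection_locallyIntegrable_periodic_and_limit_exists
    (V : ℝ → H₀ →ₗᵢ[ℂ] H₀)
    (hV : ∀ u : ℝ → H₀, StronglyMeasurable u → StronglyMeasurable fun α => V α (u α))
    (f g : ℝ → H₀) (hf : StableSection V f) (hg : StableSection V g) :
    LocallyIntegrable (fun α => (inner ℂ (f α) (g α) : ℂ)) volume ∧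
    (∃ α₀ > (0 : ℝ), ∀ᵐ α ∂(volume : Measure ℝ), α₀ ≤ α →
        (inner ℂ (f (α + 1)) (g (α + 1)) : ℂ) = (inner ℂ (f α) (g α) : ℂ)) ∧
    ∃ c : ℂ,
      Tendsto (fun m : ℕ => ∫ α in Set.Ioc (m : ℝ) ((m : ℝ) + 1), (inner ℂ (f α) (g α) : ℂ))
        atTop (𝓝 c) := by
  obtain ⟨⟨hfm, hfK⟩, a, ha, haf⟩ := hf
  obtain ⟨⟨hgm, hgK⟩, b, hb, hbg⟩ := hg
  set h : ℝ → ℂ := fun α => (inner ℂ (f α) (g α) : ℂ) with hh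
  have hmeas : StronglyMeasurable h := hfm.inner hgm
  -- local integrability
  have hloc : LocallyIntegrable h volume := by
    rw [locallyIntegrable_iff]
    intro K hK
    have hint : IntegrableOn (fun α => ‖f α‖ ^ 2 + ‖g α‖ ^ 2) K volume :=
      (hfK K hK).add (hgK K hK)
    refine Integrable.mono' hint (hmeas.aestronglyMeasurable.restrict) ?_
    refine Filter.Eventually.of_forall fun α => ?_
    have h1 : ‖h α‖ ≤ ‖f α‖ * ‖g α‖ := norm_inner_le_norm _ _
    nlinarith [norm_nonneg (f α), norm_nonneg (g α), sq_nonneg (‖f α‖ - ‖g α‖)]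
  -- eventual periodicity
  have hper : ∀ᵐ α ∂(volume : Measure ℝ), max a b ≤ α → h (α + 1) = h α := by
    filter_upwards [haf, hbg] with α h1 h2 hα
    have := h1 (le_trans (le_max_left a b) hα)
    have := h2 (le_trans (le_max_right a b) hα)
    simp only [hh, this, ‹f (α + 1) = V α (f α)›, LinearIsometry.inner_map_map]
  refine ⟨hloc, ⟨max a b, lt_max_of_lt_left ha, hper⟩, ?_⟩
  -- the limit exists: the sequence is eventually constant
  set n₀ : ℕ := ⌈max a b⌉₊
  have hn₀ : max a b ≤ (n₀ : ℝ) := Nat.le_ceil _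
  set I : ℕ → ℂ := fun m => ∫ α in Set.Ioc (m : ℝ) ((m : ℝ) + 1), h α with hI
  have key : ∀ m : ℕ, n₀ ≤ m → I (m + 1) = I m := by
    intro m hm
    have hmr : max a b ≤ (m : ℝ) := hn₀.trans (by exact_mod_cast hm)
    have e1 : I (m + 1) = ∫ α in ((m : ℝ) + 1)..((m : ℝ) + 2), h α := by
      rw [hI]
      push_cast
      rw [intervalIntegral.integral_of_le (by linarith)]
      ring_nf
    have e2 : (∫ α in (m : ℝ)..((m : ℝ) + 1), h (α + 1)) =
        ∫ α in ((m : ℝ) + 1)..((m : ℝ) + 2), h α := by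
      have := intervalIntegral.integral_comp_add_right (a := (m : ℝ)) (b := (m : ℝ) + 1)
        (f := h) 1
      convert this using 2 <;> ring
    have e3 : (∫ α in (m : ℝ)..((m : ℝ) + 1), h (α + 1)) =
        ∫ α in (m : ℝ)..((m : ℝ) + 1), h α := by
      rw [intervalIntegral.integral_of_le (by linarith),
        intervalIntegral.integral_of_le (by linarith)]
      refine setIntegral_congr_ae measurableSet_Ioc ?_
      filter_upwards [hper] with α hα hmem
      exact hα (hmr.trans hmem.1.le)
    rw [e1, ← e2, e3, hI, intervalIntegral.integral_of_le (by linarith)]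
  have hconst : ∀ m : ℕ, n₀ ≤ m → I m = I n₀ := by
    intro m hm
    induction m, hm using Nat.le_induction with
    | base => rfl
    | succ m hm ih => rw [key m hm, ih]
  refine ⟨I n₀, Tendsto.congr' ?_ tendsto_const_nhds⟩
  filter_upwards [eventually_ge_atTop n₀] with m hm
  exact (hconst m hm).symm

end
end

section
/- 𝒮 is a complex linear subspace of the space of functions ℝ → H₀ (it contains 0 and is closed under pointwise addition and scalar multiplication), and the form ⟨·,·⟩ is a semi-inner product on 𝒮: for all f, g, h ∈ 𝒮 and c ∈ ℂ one has ⟨f, g + h⟩ = ⟨f,g⟩ + ⟨f,h⟩, ⟨f, c·g⟩ = c·⟨f,g⟩, ⟨g,f⟩ = conj(⟨f,g⟩), and ⟨f,f⟩ is a nonnegative real number. -/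
open MeasureTheory Filter Topology ComplexConjugate

noncomputable section

variable {H₀ : Type*} [NormedAddCommGroup H₀] [InnerProductSpace ℂ H₀] [CompleteSpace H₀]

/-- The null space `𝒩 ⊆ 𝒮` of sections vanishing a.e. eventually. -/
def NullSection (V : ℝ → H₀ →ₗᵢ[ℂ] H₀) (f : ℝ → H₀) : Prop :=
  StableSection V f ∧ ∃ α₀ > (0 : ℝ), ∀ᵐ α ∂(volume : Measure ℝ), α₀ ≤ α → f α = 0

/-- The semi-inner product `⟨f,g⟩ = lim_{m→∞, m ∈ ℕ} ∫_m^{m+1} ⟪f(α), g(α)⟫ dα` on `𝒮`. -/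
def sinn (f g : ℝ → H₀) : ℂ :=
  limUnder atTop
    (fun m : ℕ => ∫ α in Set.Ioc (m : ℝ) ((m : ℝ) + 1), (inner ℂ (f α) (g α) : ℂ))

private def phi (f g : ℝ → H₀) (m : ℕ) : ℂ :=
  ∫ α in Set.Ioc (m : ℝ) ((m : ℝ) + 1), (inner ℂ (f α) (g α) : ℂ)

private lemma sinn_eq_limUnder_phi (f g : ℝ → H₀) : sinn f g = limUnder atTop (phi f g) := rfl

private lemma integrableOn_inner' {f g : ℝ → H₀} (hf : LocSqInt f) (hg : LocSqInt g)
    {K : Set ℝ} (hK : IsCompact K) :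
    IntegrableOn (fun α => (inner ℂ (f α) (g α) : ℂ)) K volume := by
  refine Integrable.mono' ((hf.2 K hK).add (hg.2 K hK))
    ((hf.1.inner hg.1).aestronglyMeasurable.restrict) ?_
  filter_upwards with α
  calc ‖(inner ℂ (f α) (g α) : ℂ)‖ ≤ ‖f α‖ * ‖g α‖ := norm_inner_le_norm _ _
    _ ≤ ‖f α‖ ^ 2 + ‖g α‖ ^ 2 := by nlinarith [sq_nonneg (‖f α‖ - ‖g α‖)]

private lemma integrableOn_inner_Ioc {f g : ℝ → H₀} (hf : LocSqInt f) (hg : LocSqInt g)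
    (m : ℕ) :
    IntegrableOn (fun α => (inner ℂ (f α) (g α) : ℂ)) (Set.Ioc (m : ℝ) ((m : ℝ) + 1)) volume :=
  (integrableOn_inner' hf hg isCompact_Icc).mono_set Set.Ioc_subset_Icc_self

private lemma phi_succ {V : ℝ → H₀ →ₗᵢ[ℂ] H₀} {f g : ℝ → H₀} {α₀ : ℝ}
    (hf : ∀ᵐ α ∂(volume : Measure ℝ), α₀ ≤ α → f (α + 1) = V α (f α))
    (hg : ∀ᵐ α ∂(volume : Measure ℝ), α₀ ≤ α → g (α + 1) = V α (g α))
    {a : ℝ} (ha : α₀ ≤ a) :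
    (∫ α in Set.Ioc (a + 1) (a + 2), (inner ℂ (f α) (g α) : ℂ)) =
      ∫ α in Set.Ioc a (a + 1), (inner ℂ (f α) (g α) : ℂ) := by
  have h1 : (∫ α in Set.Ioc a (a + 1), (inner ℂ (f (α + 1)) (g (α + 1)) : ℂ)) =
      ∫ α in Set.Ioc (a + 1) (a + 2), (inner ℂ (f α) (g α) : ℂ) := by
    rw [← intervalIntegral.integral_of_le (by linarith : a + 1 ≤ a + 2),
      ← intervalIntegral.integral_of_le (by linarith : a ≤ a + 1),
      intervalIntegral.integral_comp_add_right (fun α => (inner ℂ (f α) (g α) : ℂ)) 1]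
    norm_num [show a + 1 + 1 = a + 2 by ring]
  rw [← h1]
  refine setIntegral_congr_ae measurableSet_Ioc ?_
  filter_upwards [hf, hg] with α h1 h2 hα
  rw [h1 (le_trans ha hα.1.le), h2 (le_trans ha hα.1.le), (V α).inner_map_map]

private lemma phi_eventually_const {V : ℝ → H₀ →ₗᵢ[ℂ] H₀} {f g : ℝ → H₀}
    (hf : StableSection V f) (hg : StableSection V g) :
    ∃ N : ℕ, ∀ m : ℕ, N ≤ m → phi f g m = phi f g N := by
  obtain ⟨αf, _, hfa⟩ := hf.2
  obtain ⟨αg, _, hga⟩ := hg.2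
  set N : ℕ := ⌈max αf αg⌉₊ with hNdef
  have hN : max αf αg ≤ (N : ℝ) := Nat.le_ceil _
  have hf' : ∀ᵐ α ∂(volume : Measure ℝ), (N : ℝ) ≤ α → f (α + 1) = V α (f α) := by
    filter_upwards [hfa] with α h hα
    exact h (le_trans (le_trans (le_max_left _ _) hN) hα)
  have hg' : ∀ᵐ α ∂(volume : Measure ℝ), (N : ℝ) ≤ α → g (α + 1) = V α (g α) := by
    filter_upwards [hga] with α h hα
    exact h (le_trans (le_trans (le_max_right _ _) hN) hα)
  refine ⟨N, fun m hm => ?_⟩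
  obtain ⟨n, rfl⟩ := Nat.exists_eq_add_of_le hm
  clear hm
  induction n with
  | zero => rfl
  | succ n ih =>
    have step := phi_succ (V := V) hf' hg'
      (a := ((N + n : ℕ) : ℝ)) (by exact_mod_cast Nat.le_add_right N n)
    have e1 : phi f g (N + (n + 1)) =
        ∫ α in Set.Ioc (((N + n : ℕ) : ℝ) + 1) (((N + n : ℕ) : ℝ) + 2),
          (inner ℂ (f α) (g α) : ℂ) := by
      unfold phi
      congr 1 <;> push_cast <;> ring
    rw [e1, step]
    exact ih

private lemma sinn_tendsto {V : ℝ → H₀ →ₗᵢ[ℂ] H₀} {f g : ℝ → H₀}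
    (hf : StableSection V f) (hg : StableSection V g) :
    Tendsto (phi f g) atTop (𝓝 (sinn f g)) := by
  obtain ⟨N, hN⟩ := phi_eventually_const hf hg
  have T : Tendsto (phi f g) atTop (𝓝 (phi f g N)) := tendsto_atTop_of_eventually_const hN
  rw [sinn_eq_limUnder_phi, T.limUnder_eq]
  exact T

/-- `𝒮` is a complex linear subspace of the functions `ℝ → H₀`, and `⟨·,·⟩` is a
semi-inner product on it: additive and `ℂ`-homogeneous in the second variable,
conjugate-symmetric, and `⟨f,f⟩` is a nonnegative real number. -/
theorem stableSection_subspace_and_sinn_semiInner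
    (V : ℝ → H₀ →ₗᵢ[ℂ] H₀)
    (hV : ∀ u : ℝ → H₀, StronglyMeasurable u → StronglyMeasurable fun α => V α (u α)) :
    StableSection V (0 : ℝ → H₀) ∧
    (∀ f g : ℝ → H₀, StableSection V f → StableSection V g → StableSection V (f + g)) ∧
    (∀ (c : ℂ) (f : ℝ → H₀), StableSection V f → StableSection V (c • f)) ∧
    (∀ f g h : ℝ → H₀, StableSection V f → StableSection V g → StableSection V h →
        sinn f (g + h) = sinn f g + sinn f h) ∧
    (∀ (c : ℂ) (f g : ℝ → H₀), StableSection V f → StableSection V g →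
        sinn f (c • g) = c * sinn f g) ∧
    (∀ f g : ℝ → H₀, StableSection V f → StableSection V g →
        sinn g f = starRingEnd ℂ (sinn f g)) ∧
    (∀ f : ℝ → H₀, StableSection V f → ∃ r : ℝ, 0 ≤ r ∧ sinn f f = (r : ℂ)) := by
  refine ⟨?_, ?_, ?_, ?_, ?_, ?_, ?_⟩
  · -- zero
    refine ⟨⟨stronglyMeasurable_const, fun K hK => ?_⟩, 1, one_pos, ?_⟩
    · simpa using (integrableOn_const (C := (0:ℝ)) (s := K) (μ := volume)).2
        (IsCompact.measure_lt_top hK)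
    · filter_upwards with α hα
      simp
  · -- add
    rintro f g ⟨⟨hfm, hfi⟩, αf, hαf, hfa⟩ ⟨⟨hgm, hgi⟩, αg, hαg, hga⟩
    refine ⟨⟨hfm.add hgm, fun K hK => ?_⟩, max αf αg, lt_max_of_lt_left hαf, ?_⟩
    · refine Integrable.mono' (((hfi K hK).add (hgi K hK)).const_mul 2)
        (((continuous_pow 2).comp_stronglyMeasurable
          (hfm.add hgm).norm).aestronglyMeasurable.restrict) ?_
      filter_upwards with α
      have h1 : ‖f α + g α‖ ≤ ‖f α‖ + ‖g α‖ := norm_add_le _ _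
      simp only [Pi.add_apply, norm_pow, norm_norm]
      show ‖f α + g α‖ ^ 2 ≤ 2 * (‖f α‖ ^ 2 + ‖g α‖ ^ 2)
      nlinarith [norm_nonneg (f α), norm_nonneg (g α), sq_nonneg (‖f α‖ - ‖g α‖),
        norm_nonneg (f α + g α)]
    · filter_upwards [hfa, hga] with α h1 h2 hα
      have e1 := h1 (le_trans (le_max_left _ _) hα)
      have e2 := h2 (le_trans (le_max_right _ _) hα)
      simp [Pi.add_apply, e1, e2, map_add]
  · -- smul
    rintro c f ⟨⟨hfm, hfi⟩, αf, hαf, hfa⟩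
    refine ⟨⟨hfm.const_smul c, fun K hK => ?_⟩, αf, hαf, ?_⟩
    · refine ((hfi K hK).const_mul (‖c‖ ^ 2)).congr ?_
      filter_upwards with α
      simp [Pi.smul_apply, norm_smul, mul_pow]
    · filter_upwards [hfa] with α h1 hα
      simp [Pi.smul_apply, h1 hα, (V α).map_smul]
  · -- additive
    intro f g h hf hg hh
    have T1 := sinn_tendsto hf hg
    have T2 := sinn_tendsto hf hh
    have hfun : phi f (g + h) = fun m => phi f g m + phi f h m := by
      funext m
      unfold phi
      rw [← integral_add (integrableOn_inner_Ioc hf.1 hg.1 m)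
        (integrableOn_inner_Ioc hf.1 hh.1 m)]
      refine setIntegral_congr_ae measurableSet_Ioc ?_
      filter_upwards with α _
      simp [Pi.add_apply, inner_add_right]
    have T : Tendsto (phi f (g + h)) atTop (𝓝 (sinn f g + sinn f h)) := by
      rw [hfun]; exact T1.add T2
    rw [sinn_eq_limUnder_phi, T.limUnder_eq]
  · -- homog
    intro c f g hf hg
    have T1 := sinn_tendsto hf hg
    have hfun : phi f (c • g) = fun m => c * phi f g m := by
      funext m
      unfold phi
      rw [← smul_eq_mul, ← integral_smul]
      refine setIntegral_congr_ae measurableSet_Ioc ?_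
      filter_upwards with α _
      simp [Pi.smul_apply, inner_smul_right, smul_eq_mul]
    have T : Tendsto (phi f (c • g)) atTop (𝓝 (c * sinn f g)) := by
      rw [hfun]; exact T1.const_mul c
    rw [sinn_eq_limUnder_phi, T.limUnder_eq]
  · -- conj symm
    intro f g hf hg
    have T1 := sinn_tendsto hf hg
    have hfun : phi g f = fun m => conj (phi f g m) := by
      funext m
      unfold phi
      rw [← integral_conj]
      refine setIntegral_congr_ae measurableSet_Ioc ?_
      filter_upwards with α _
      rw [inner_conj_symm]
    have T : Tendsto (phi g f) atTop (𝓝 (conj (sinn f g))) := by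
      rw [hfun]
      exact (Complex.continuous_conj.tendsto _).comp T1
    rw [sinn_eq_limUnder_phi, T.limUnder_eq]
  · -- nonneg
    intro f hf
    obtain ⟨N, hN⟩ := phi_eventually_const hf hf
    have T : Tendsto (phi f f) atTop (𝓝 (phi f f N)) := tendsto_atTop_of_eventually_const hN
    refine ⟨∫ α in Set.Ioc (N : ℝ) ((N : ℝ) + 1), ‖f α‖ ^ 2, ?_, ?_⟩
    · exact setIntegral_nonneg measurableSet_Ioc fun α _ => sq_nonneg _
    · rw [sinn_eq_limUnder_phi, T.limUnder_eq]
      unfold phi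
      rw [show (∫ α in Set.Ioc (N : ℝ) ((N : ℝ) + 1), (inner ℂ (f α) (f α) : ℂ)) =
          ∫ α in Set.Ioc (N : ℝ) ((N : ℝ) + 1), ((‖f α‖ ^ 2 : ℝ) : ℂ) from
        setIntegral_congr_ae measurableSet_Ioc (by
          filter_upwards with α _
          rw [inner_self_eq_norm_sq_to_K]
          norm_cast)]
      exact integral_ofReal

end
end

section
/- Let f ∈ 𝒮 and let α₀ > 0 be such that f(α+1) = V_α(f(α)) for almost every α ≥ α₀. Then for every real T ≥ α₀ one has ⟨f,f⟩ = ∫_T^{T+1} ‖f(α)‖² dα; in particular ⟨f,f⟩ is a nonnegative real number. -/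
open MeasureTheory Filter Topology

noncomputable section

variable {H₀ : Type*} [NormedAddCommGroup H₀] [InnerProductSpace ℂ H₀] [CompleteSpace H₀]

/-- If `f ∈ 𝒮` is stable beyond `α₀ > 0`, then for every `T ≥ α₀` one has
`⟨f,f⟩ = ∫_T^{T+1} ‖f(α)‖² dα`; in particular `⟨f,f⟩` is a nonnegative real number. -/
theorem sinn_self_eq_integral_normSq
    (V : ℝ → H₀ →ₗᵢ[ℂ] H₀)
    (hV : ∀ u : ℝ → H₀, StronglyMeasurable u → StronglyMeasurable fun α => V α (u α))
    (f : ℝ → H₀) (hf : StableSection V f)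
    (α₀ : ℝ) (hα₀ : 0 < α₀)
    (hfs : ∀ᵐ α ∂(volume : Measure ℝ), α₀ ≤ α → f (α + 1) = V α (f α)) :
    ∀ T : ℝ, α₀ ≤ T →
      Tendsto (fun m : ℕ => ∫ α in Set.Ioc (m : ℝ) ((m : ℝ) + 1), (inner ℂ (f α) (f α) : ℂ))
        atTop (𝓝 ((∫ α in Set.Ioc T (T + 1), ‖f α‖ ^ 2 : ℝ) : ℂ)) ∧
      0 ≤ ∫ α in Set.Ioc T (T + 1), ‖f α‖ ^ 2 := by
  intro T hT
  obtain ⟨⟨hmeas, hloc⟩, -⟩ := hf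
  set h : ℝ → ℝ := fun α => ‖f α‖ ^ 2 with hh
  -- interval integrability everywhere
  have hint : ∀ a b : ℝ, IntervalIntegrable h volume a b := by
    intro a b
    rw [intervalIntegrable_iff]
    exact (hloc (Set.uIcc a b) isCompact_uIcc).mono_set Set.Ioc_subset_Icc_self
  -- a.e. periodicity of h beyond α₀
  have hper : ∀ᵐ α ∂(volume : Measure ℝ), α₀ ≤ α → h (α + 1) = h α := by
    filter_upwards [hfs] with α hα hα₀'
    simp [hh, hα hα₀', (V α).norm_map]
  -- the key: the integral over [S,S+1] is the same for all S ≥ α₀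
  have key : ∀ S U : ℝ, α₀ ≤ S → S ≤ U →
      (∫ α in S..(S + 1), h α) = ∫ α in U..(U + 1), h α := by
    intro S U hS hSU
    have hshift : (∫ α in (S + 1)..(U + 1), h α) = ∫ α in S..U, h α := by
      rw [← intervalIntegral.integral_comp_add_right h 1]
      refine intervalIntegral.integral_congr_ae ?_
      filter_upwards [hper] with α hα hmem
      rw [Set.uIoc_of_le hSU] at hmem
      exact hα (hS.trans hmem.1.le)
    have h1 : (∫ α in S..(S + 1), h α) + ∫ α in (S + 1)..(U + 1), h α
        = ∫ α in S..(U + 1), h α :=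
      intervalIntegral.integral_add_adjacent_intervals (hint _ _) (hint _ _)
    have h2 : (∫ α in S..U, h α) + ∫ α in U..(U + 1), h α
        = ∫ α in S..(U + 1), h α :=
      intervalIntegral.integral_add_adjacent_intervals (hint _ _) (hint _ _)
    linarith [h1, h2, hshift]
  have key' : ∀ S U : ℝ, α₀ ≤ S → α₀ ≤ U →
      (∫ α in S..(S + 1), h α) = ∫ α in U..(U + 1), h α := by
    intro S U hS hU
    rcases le_total S U with hle | hle
    · exact key S U hS hle
    · exact (key U S hU hle).symm
  -- rewrite Ioc integrals as interval integrals
  have hIoc : ∀ S : ℝ, (∫ α in Set.Ioc S (S + 1), h α) = ∫ α in S..(S + 1), h α := by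
    intro S
    rw [intervalIntegral.integral_of_le (by linarith)]
  -- the complex-valued integral over Ioc m (m+1) equals the real one, cast
  have hseq : ∀ S : ℝ, (∫ α in Set.Ioc S (S + 1), (inner ℂ (f α) (f α) : ℂ))
      = ((∫ α in Set.Ioc S (S + 1), h α : ℝ) : ℂ) := by
    intro S
    have : (∫ α in Set.Ioc S (S + 1), (inner ℂ (f α) (f α) : ℂ))
        = ∫ α in Set.Ioc S (S + 1), ((h α : ℝ) : ℂ) := by
      refine setIntegral_congr_fun measurableSet_Ioc fun α _ => ?_
      simp [hh, inner_self_eq_norm_sq_to_K]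
    exact this.trans integral_ofReal
  constructor
  · refine Tendsto.congr' ?_ tendsto_const_nhds
    filter_upwards [eventually_ge_atTop ⌈α₀⌉₊] with m hm
    have hm' : α₀ ≤ (m : ℝ) := (Nat.le_ceil α₀).trans (by exact_mod_cast hm)
    rw [hseq, hIoc, hIoc, key' T (m : ℝ) hT hm']
  · exact setIntegral_nonneg measurableSet_Ioc fun α _ => sq_nonneg _

end
end

section
/- (Characterization of the null space.) For every f ∈ 𝒮 one has ⟨f,f⟩ = 0 if and only if f ∈ 𝒩, i.e. if and only if there exists α₀ > 0 such that f(α) = 0 for almost every α ≥ α₀. -/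
open MeasureTheory Filter Topology

noncomputable section

variable {H₀ : Type*} [NormedAddCommGroup H₀] [InnerProductSpace ℂ H₀] [CompleteSpace H₀]

/-- Characterization of the null space: for `f ∈ 𝒮` one has `⟨f,f⟩ = 0` if and only if
`f ∈ 𝒩`, i.e. `f` vanishes a.e. beyond some `α₀ > 0`. -/
theorem sinn_self_eq_zero_iff_nullSection
    (V : ℝ → H₀ →ₗᵢ[ℂ] H₀)
    (hV : ∀ u : ℝ → H₀, StronglyMeasurable u → StronglyMeasurable fun α => V α (u α))
    (f : ℝ → H₀) (hf : StableSection V f) :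
    Tendsto (fun m : ℕ => ∫ α in Set.Ioc (m : ℝ) ((m : ℝ) + 1), (inner ℂ (f α) (f α) : ℂ))
        atTop (𝓝 0)
      ↔ ∃ α₀ > (0 : ℝ), ∀ᵐ α ∂(volume : Measure ℝ), α₀ ≤ α → f α = 0 := by
  obtain ⟨⟨hmeas, hint⟩, α₀, hα₀pos, hstab⟩ := hf
  have hnorm : ∀ᵐ α ∂(volume : Measure ℝ), α₀ ≤ α → ‖f (α + 1)‖ = ‖f α‖ := by
    filter_upwards [hstab] with α h hα
    rw [h hα, (V α).norm_map]
  set g : ℝ → ℝ := fun α => ‖f α‖ ^ 2 with hgdef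
  have hgint : ∀ a b : ℝ, IntegrableOn g (Set.Ioc a b) volume := fun a b =>
    (hint (Set.Icc a b) isCompact_Icc).mono_set Set.Ioc_subset_Icc_self
  have hkey : ∀ m : ℕ, (∫ α in Set.Ioc (m : ℝ) ((m : ℝ) + 1), (inner ℂ (f α) (f α) : ℂ))
      = ((∫ α in Set.Ioc (m : ℝ) ((m : ℝ) + 1), g α : ℝ) : ℂ) := by
    intro m
    rw [show ((∫ α in Set.Ioc (m : ℝ) ((m : ℝ) + 1), g α : ℝ) : ℂ)
        = ∫ α in Set.Ioc (m : ℝ) ((m : ℝ) + 1), ((g α : ℝ) : ℂ) from integral_ofReal.symm]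
    refine integral_congr_ae (Eventually.of_forall fun α => ?_)
    show (inner ℂ (f α) (f α) : ℂ) = ((g α : ℝ) : ℂ)
    rw [inner_self_eq_norm_sq_to_K]
    simp only [hgdef]
    norm_cast
  have hstep : ∀ t : ℝ, α₀ ≤ t →
      (∫ α in Set.Ioc (t + 1) (t + 1 + 1), g α) = ∫ α in Set.Ioc t (t + 1), g α := by
    intro t ht
    have h1 : (∫ α in Set.Ioc (t + 1) (t + 1 + 1), g α)
        = ∫ α in Set.Ioc t (t + 1), g (α + 1) := by
      rw [← intervalIntegral.integral_of_le (by linarith : t + 1 ≤ t + 1 + 1),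
        ← intervalIntegral.integral_of_le (by linarith : t ≤ t + 1),
        intervalIntegral.integral_comp_add_right (a := t) (b := t + 1) g 1]
    rw [h1]
    refine setIntegral_congr_ae measurableSet_Ioc ?_
    filter_upwards [hnorm] with α hα hmem
    simp only [hgdef]
    rw [hα (le_trans ht hmem.1.le)]
  constructor
  · intro htend
    set N : ℕ := ⌈α₀⌉₊ with hNdef
    have hN : α₀ ≤ (N : ℝ) := Nat.le_ceil α₀
    have hconst : ∀ m : ℕ, N ≤ m →
        (∫ α in Set.Ioc (m : ℝ) ((m : ℝ) + 1), g α)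
          = ∫ α in Set.Ioc (N : ℝ) ((N : ℝ) + 1), g α := by
      intro m hm
      induction m, hm using Nat.le_induction with
      | base => rfl
      | succ n hn ih =>
        rw [← ih]
        have h := hstep (n : ℝ) (hN.trans (by exact_mod_cast hn))
        push_cast
        exact h
    have htend2 : Tendsto (fun _ : ℕ => ((∫ α in Set.Ioc (N : ℝ) ((N : ℝ) + 1), g α : ℝ) : ℂ))
        atTop (𝓝 0) := by
      refine htend.congr' ?_
      filter_upwards [eventually_ge_atTop N] with m hm
      rw [hkey m, hconst m hm]
    have hI0 : (∫ α in Set.Ioc (N : ℝ) ((N : ℝ) + 1), g α) = 0 := by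
      have := tendsto_nhds_unique htend2 tendsto_const_nhds
      exact_mod_cast this.symm
    have hIall : ∀ k : ℕ, (∫ α in Set.Ioc ((N : ℝ) + k) ((N : ℝ) + k + 1), g α) = 0 := by
      intro k
      have : (((N + k : ℕ) : ℝ)) = (N : ℝ) + k := by push_cast; ring
      have h := hconst (N + k) (Nat.le_add_right N k)
      rw [this] at h
      rw [h, hI0]
    have hzero : ∀ k : ℕ, ∀ᵐ α ∂(volume : Measure ℝ),
        α ∈ Set.Ioc ((N : ℝ) + k) ((N : ℝ) + k + 1) → f α = 0 := by
      intro k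
      have hnn : 0 ≤ᵐ[(volume : Measure ℝ).restrict (Set.Ioc ((N : ℝ) + k) ((N : ℝ) + k + 1))] g :=
        Eventually.of_forall fun α => by positivity
      have := (setIntegral_eq_zero_iff_of_nonneg_ae hnn (hgint _ _)).mp (hIall k)
      rw [EventuallyEq, ae_restrict_iff' measurableSet_Ioc] at this
      filter_upwards [this] with α hα hmem
      have : ‖f α‖ ^ 2 = 0 := hα hmem
      have : ‖f α‖ = 0 := by nlinarith [norm_nonneg (f α)]
      simpa using this
    refine ⟨(N : ℝ) + 1, by positivity, ?_⟩
    rw [← ae_all_iff] at hzero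
    filter_upwards [hzero] with α hα hge
    have hαN : (N : ℝ) < α := by linarith
    have hpos : (0 : ℝ) < α - N := by linarith
    set j : ℕ := ⌈α - (N : ℝ)⌉₊ with hjdef
    have hj1 : 1 ≤ j := Nat.one_le_ceil_iff.mpr hpos
    refine hα (j - 1) ⟨?_, ?_⟩
    · have hcast : ((j - 1 : ℕ) : ℝ) = (j : ℝ) - 1 := by
        rw [Nat.cast_sub hj1]; simp
      have : (j : ℝ) < (α - N) + 1 := Nat.ceil_lt_add_one hpos.le
      rw [hcast]; linarith
    · have hcast : ((j - 1 : ℕ) : ℝ) = (j : ℝ) - 1 := by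
        rw [Nat.cast_sub hj1]; simp
      have : α - (N : ℝ) ≤ j := Nat.le_ceil _
      rw [hcast]; linarith
  · rintro ⟨β, hβpos, hzero⟩
    have : (fun m : ℕ => ∫ α in Set.Ioc (m : ℝ) ((m : ℝ) + 1), (inner ℂ (f α) (f α) : ℂ))
        =ᶠ[atTop] fun _ => (0 : ℂ) := by
      filter_upwards [eventually_ge_atTop ⌈β⌉₊] with m hm
      refine integral_eq_zero_of_ae ?_
      have hmem := ae_restrict_mem (μ := (volume : Measure ℝ))
        (measurableSet_Ioc (a := (m : ℝ)) (b := (m : ℝ) + 1))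
      filter_upwards [hmem, ae_restrict_of_ae hzero] with α hα hz
      have : β ≤ α := by
        have : β ≤ (m : ℝ) := le_trans (Nat.le_ceil β) (by exact_mod_cast hm)
        linarith [hα.1]
      rw [hz this]
      simp
    exact Tendsto.congr' this.symm tendsto_const_nhds

end
end

section
/- (Isometric embedding of K_m = ∫_m^{m+1} E_α dα into H.) Let m ∈ ℕ and let f₀ : ℝ → H₀ be strongly measurable with f₀(α) = 0 for almost every α ∉ (m, m+1] and ∫_m^{m+1} ‖f₀(α)‖² dα < ∞. Then there exists f ∈ 𝒮 such that f(α) = 0 for all α ≤ m, f(α) = f₀(α) for almost every α ∈ (m, m+1], f(α+1) = V_α(f(α)) for almost every α ≥ m, and ⟨f,f⟩ = ∫_m^{m+1} ‖f₀(α)‖² dα. -/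
open MeasureTheory Filter Topology

noncomputable section

variable {H₀ : Type*} [NormedAddCommGroup H₀] [InnerProductSpace ℂ H₀] [CompleteSpace H₀]

/-- Iterated propagation of a section by the isometries `V`. -/
def extSec (V : ℝ → H₀ →ₗᵢ[ℂ] H₀) (f₀ : ℝ → H₀) : ℕ → ℝ → H₀
  | 0 => f₀
  | (k + 1) => fun α => V (α - 1) (extSec V f₀ k (α - 1))

lemma extSec_norm (V : ℝ → H₀ →ₗᵢ[ℂ] H₀) (f₀ : ℝ → H₀) :
    ∀ (k : ℕ) (α : ℝ), ‖extSec V f₀ k α‖ = ‖f₀ (α - k)‖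
  | 0, α => by simp [extSec]
  | (k + 1), α => by
      rw [extSec, LinearIsometry.norm_map, extSec_norm V f₀ k (α - 1)]
      push_cast; ring_nf

lemma extSec_meas (V : ℝ → H₀ →ₗᵢ[ℂ] H₀) (f₀ : ℝ → H₀)
    (hV : ∀ u : ℝ → H₀, StronglyMeasurable u → StronglyMeasurable fun α => V α (u α))
    (hmeas : StronglyMeasurable f₀) : ∀ k : ℕ, StronglyMeasurable (extSec V f₀ k)
  | 0 => hmeas
  | (k + 1) => by
      have ih := extSec_meas V f₀ hV hmeas k
      have h1 : StronglyMeasurable fun β : ℝ => V β (extSec V f₀ k β) := hV _ ih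
      exact h1.comp_measurable (measurable_id.sub_const 1)

lemma integrableOn_shift {g : ℝ → ℝ} {a b : ℝ}
    (hg : IntegrableOn g (Set.Ioc a b) volume) (c : ℝ) :
    IntegrableOn (fun α => g (α - c)) (Set.Ioc (a + c) (b + c)) volume := by
  have h1 : Integrable ((Set.Ioc a b).indicator g) volume :=
    (integrable_indicator_iff measurableSet_Ioc).2 hg
  have h2 : Integrable (fun α => (Set.Ioc a b).indicator g (α - c)) volume :=
    h1.comp_sub_right c
  have heq : (fun α => (Set.Ioc a b).indicator g (α - c)) =
      (Set.Ioc (a + c) (b + c)).indicator (fun α => g (α - c)) := by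
    funext α
    by_cases h : α - c ∈ Set.Ioc a b
    · rw [Set.indicator_of_mem h, Set.indicator_of_mem]
      simp only [Set.mem_Ioc] at h ⊢; constructor <;> linarith [h.1, h.2]
    · rw [Set.indicator_of_notMem h, Set.indicator_of_notMem]
      simp only [Set.mem_Ioc] at h ⊢
      intro h'; exact absurd ⟨by linarith [h'.1], by linarith [h'.2]⟩ h
  rw [heq] at h2
  exact (integrable_indicator_iff measurableSet_Ioc).1 h2

lemma integral_shift (g : ℝ → ℝ) {a b : ℝ} (c : ℝ) :
    ∫ α in Set.Ioc (a + c) (b + c), g (α - c) = ∫ α in Set.Ioc a b, g α := by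
  have heq : (Set.Ioc (a + c) (b + c)).indicator (fun α => g (α - c)) =
      fun α => (Set.Ioc a b).indicator g (α - c) := by
    funext α
    by_cases h : α - c ∈ Set.Ioc a b
    · rw [Set.indicator_of_mem h, Set.indicator_of_mem]
      simp only [Set.mem_Ioc] at h ⊢; constructor <;> linarith [h.1, h.2]
    · rw [Set.indicator_of_notMem h, Set.indicator_of_notMem]
      simp only [Set.mem_Ioc] at h ⊢
      intro h'; exact absurd ⟨by linarith [h'.1], by linarith [h'.2]⟩ h
  rw [← integral_indicator measurableSet_Ioc, heq,
    integral_sub_right_eq_self (fun α => (Set.Ioc a b).indicator g α) c,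
    integral_indicator measurableSet_Ioc]

/-- Isometric embedding of `K_m = ∫_m^{m+1} E_α dα` into `H`: every square-integrable
section supported in `(m, m+1]` extends to a stable section `f ∈ 𝒮` with
`⟨f,f⟩ = ∫_m^{m+1} ‖f₀(α)‖² dα`. -/
theorem exists_stable_extension_of_window_section
    (V : ℝ → H₀ →ₗᵢ[ℂ] H₀)
    (hV : ∀ u : ℝ → H₀, StronglyMeasurable u → StronglyMeasurable fun α => V α (u α))
    (m : ℕ) (f₀ : ℝ → H₀) (hmeas : StronglyMeasurable f₀)
    (hsupp : ∀ᵐ α ∂(volume : Measure ℝ), α ∉ Set.Ioc (m : ℝ) ((m : ℝ) + 1) → f₀ α = 0)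
    (hint : IntegrableOn (fun α => ‖f₀ α‖ ^ 2) (Set.Ioc (m : ℝ) ((m : ℝ) + 1)) volume) :
    ∃ f : ℝ → H₀, StableSection V f ∧
      (∀ α : ℝ, α ≤ (m : ℝ) → f α = 0) ∧
      (∀ᵐ α ∂(volume : Measure ℝ), α ∈ Set.Ioc (m : ℝ) ((m : ℝ) + 1) → f α = f₀ α) ∧
      (∀ᵐ α ∂(volume : Measure ℝ), (m : ℝ) ≤ α → f (α + 1) = V α (f α)) ∧
      Tendsto (fun k : ℕ => ∫ α in Set.Ioc (k : ℝ) ((k : ℝ) + 1), (inner ℂ (f α) (f α) : ℂ))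
        atTop (𝓝 ((∫ α in Set.Ioc (m : ℝ) ((m : ℝ) + 1), ‖f₀ α‖ ^ 2 : ℝ) : ℂ)) := by
  classical
  set f : ℝ → H₀ := fun α => if (m : ℝ) < α then extSec V f₀ (⌈α - (m : ℝ)⌉₊ - 1) α else 0
    with hfdef
  -- f vanishes up to m
  have h0 : ∀ α : ℝ, α ≤ (m : ℝ) → f α = 0 := fun α hα => if_neg (not_lt.2 hα)
  -- value of f on the window (m+k, m+k+1]
  have h1 : ∀ (k : ℕ) (α : ℝ), (m : ℝ) + k < α → α ≤ (m : ℝ) + k + 1 →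
      f α = extSec V f₀ k α := by
    intro k α ha hb
    have hk0 : (0 : ℝ) ≤ (k : ℝ) := Nat.cast_nonneg k
    have hmα : (m : ℝ) < α := by linarith
    have hceil : ⌈α - (m : ℝ)⌉₊ = k + 1 := by
      rw [Nat.ceil_eq_iff (Nat.succ_ne_zero k)]
      constructor
      · push_cast; linarith
      · push_cast; linarith
    simp only [hfdef]
    rw [if_pos hmα, hceil, Nat.add_sub_cancel]
  -- the stability identity, valid everywhere past m
  have h2 : ∀ α : ℝ, (m : ℝ) < α → f (α + 1) = V α (f α) := by
    intro α hα
    have hpos : 0 < ⌈α - (m : ℝ)⌉₊ := Nat.ceil_pos.2 (sub_pos.2 hα)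
    obtain ⟨k, hk⟩ : ∃ k, ⌈α - (m : ℝ)⌉₊ = k + 1 :=
      ⟨⌈α - (m : ℝ)⌉₊ - 1, (Nat.succ_pred_eq_of_pos hpos).symm⟩
    have hbounds := (Nat.ceil_eq_iff (Nat.succ_ne_zero k)).1 hk
    have ha : (m : ℝ) + k < α := by
      have := hbounds.1; push_cast at this; linarith
    have hb : α ≤ (m : ℝ) + k + 1 := by
      have := hbounds.2; push_cast at this; linarith
    have hfα : f α = extSec V f₀ k α := h1 k α ha hb
    have hfα1 : f (α + 1) = extSec V f₀ (k + 1) (α + 1) := by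
      refine h1 (k + 1) (α + 1) ?_ ?_ <;> push_cast <;> linarith
    rw [hfα, hfα1]
    show V (α + 1 - 1) (extSec V f₀ k (α + 1 - 1)) = V α (extSec V f₀ k α)
    rw [add_sub_cancel_right]
  -- strong measurability of f
  have hext := extSec_meas V f₀ hV hmeas
  have hSmeas : ∀ n : ℕ, StronglyMeasurable fun α : ℝ => ∑ k ∈ Finset.range n,
      (Set.Ioc ((m : ℝ) + k) ((m : ℝ) + k + 1)).indicator (extSec V f₀ k) α := by
    intro n
    apply Finset.stronglyMeasurable_fun_sum
    intro k _
    exact (hext k).indicator measurableSet_Ioc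
  have htend : ∀ α : ℝ, Tendsto (fun n : ℕ => ∑ k ∈ Finset.range n,
      (Set.Ioc ((m : ℝ) + k) ((m : ℝ) + k + 1)).indicator (extSec V f₀ k) α)
      atTop (𝓝 (f α)) := by
    intro α
    rcases le_or_gt α (m : ℝ) with hα | hα
    · have hz : ∀ n : ℕ, (∑ k ∈ Finset.range n,
          (Set.Ioc ((m : ℝ) + k) ((m : ℝ) + k + 1)).indicator (extSec V f₀ k) α) = 0 := by
        intro n
        apply Finset.sum_eq_zero
        intro k _
        apply Set.indicator_of_notMem
        simp only [Set.mem_Ioc, not_and_or, not_lt]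
        left; have : (0 : ℝ) ≤ (k : ℝ) := Nat.cast_nonneg k; linarith
      simp only [hz, h0 α hα]
      exact tendsto_const_nhds
    · have hpos : 0 < ⌈α - (m : ℝ)⌉₊ := Nat.ceil_pos.2 (sub_pos.2 hα)
      obtain ⟨k, hk⟩ : ∃ k, ⌈α - (m : ℝ)⌉₊ = k + 1 :=
        ⟨⌈α - (m : ℝ)⌉₊ - 1, (Nat.succ_pred_eq_of_pos hpos).symm⟩
      have hbounds := (Nat.ceil_eq_iff (Nat.succ_ne_zero k)).1 hk
      have ha : (m : ℝ) + k < α := by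
        have := hbounds.1; push_cast at this; linarith
      have hb : α ≤ (m : ℝ) + k + 1 := by
        have := hbounds.2; push_cast at this; linarith
      refine Tendsto.congr' ?_ (tendsto_const_nhds (x := f α))
      filter_upwards [eventually_ge_atTop (k + 1)] with n hn
      rw [Finset.sum_eq_single_of_mem k (Finset.mem_range.2 hn)]
      · rw [Set.indicator_of_mem (Set.mem_Ioc.2 ⟨ha, hb⟩), h1 k α ha hb]
      · intro i _ hik
        apply Set.indicator_of_notMem
        simp only [Set.mem_Ioc, not_and_or, not_lt, not_le]
        rcases lt_or_gt_of_ne hik with h | h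
        · right
          have h' : (i : ℝ) + 1 ≤ (k : ℝ) := by exact_mod_cast h
          linarith
        · left
          have h' : (k : ℝ) + 1 ≤ (i : ℝ) := by exact_mod_cast h
          linarith
  have hfmeas : StronglyMeasurable f :=
    stronglyMeasurable_of_tendsto atTop hSmeas (tendsto_pi_nhds.2 htend)
  -- integrability on each window
  have hpiece : ∀ k : ℕ, IntegrableOn (fun α => ‖f α‖ ^ 2)
      (Set.Ioc ((m : ℝ) + k) ((m : ℝ) + k + 1)) volume := by
    intro k
    have hsh := integrableOn_shift hint (k : ℝ)
    rw [show (m : ℝ) + 1 + (k : ℝ) = (m : ℝ) + k + 1 by ring] at hsh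
    refine hsh.congr_fun ?_ measurableSet_Ioc
    intro α hα
    show ‖f₀ (α - (k : ℝ))‖ ^ 2 = ‖f α‖ ^ 2
    rw [h1 k α hα.1 hα.2, extSec_norm]
  -- integrability on Iic (m + n)
  have hIic : ∀ n : ℕ, IntegrableOn (fun α => ‖f α‖ ^ 2) (Set.Iic ((m : ℝ) + n)) volume := by
    intro n
    induction n with
    | zero =>
      simp only [Nat.cast_zero, add_zero]
      refine (integrableOn_zero : IntegrableOn (fun _ : ℝ => (0 : ℝ)) _ volume).congr_fun ?_ measurableSet_Iic
      intro α hα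
      simp [h0 α hα]
    | succ n ih =>
      have hset : Set.Iic ((m : ℝ) + (n + 1 : ℕ)) =
          Set.Iic ((m : ℝ) + n) ∪ Set.Ioc ((m : ℝ) + n) ((m : ℝ) + n + 1) := by
        push_cast
        rw [Set.Iic_union_Ioc_eq_Iic (by linarith), add_assoc]
      rw [hset]
      exact ih.union (hpiece n)
  -- integrability on compacts
  have hK : ∀ K : Set ℝ, IsCompact K → IntegrableOn (fun α => ‖f α‖ ^ 2) K volume := by
    intro K hKc
    obtain ⟨C, hC⟩ := hKc.bddAbove
    obtain ⟨n, hn⟩ := exists_nat_ge (C - (m : ℝ))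
    refine (hIic n).mono_set ?_
    intro x hx
    have hxC : x ≤ C := hC hx
    simp only [Set.mem_Iic]
    linarith
  -- the integral identity on windows past m
  have hval : ∀ k : ℕ, m ≤ k →
      (∫ α in Set.Ioc (k : ℝ) ((k : ℝ) + 1), (inner ℂ (f α) (f α) : ℂ)) =
      ((∫ α in Set.Ioc (m : ℝ) ((m : ℝ) + 1), ‖f₀ α‖ ^ 2 : ℝ) : ℂ) := by
    intro k hk
    have hkm : (k : ℝ) = (m : ℝ) + ((k - m : ℕ) : ℝ) := by
      push_cast [Nat.cast_sub hk]; ring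
    set j : ℕ := k - m with hj
    have hIeq : (∫ α in Set.Ioc (k : ℝ) ((k : ℝ) + 1), ‖f α‖ ^ 2) =
        ∫ α in Set.Ioc (m : ℝ) ((m : ℝ) + 1), ‖f₀ α‖ ^ 2 := by
      rw [← integral_shift (fun α => ‖f₀ α‖ ^ 2) (j : ℝ), hkm]
      rw [show (m : ℝ) + 1 + (j : ℝ) = (m : ℝ) + j + 1 by ring]
      refine setIntegral_congr_fun measurableSet_Ioc ?_
      intro α hα
      simp only
      rw [h1 j α hα.1 hα.2, extSec_norm]
    calc (∫ α in Set.Ioc (k : ℝ) ((k : ℝ) + 1), (inner ℂ (f α) (f α) : ℂ))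
        = ∫ α in Set.Ioc (k : ℝ) ((k : ℝ) + 1), ((‖f α‖ ^ 2 : ℝ) : ℂ) := by
          refine setIntegral_congr_fun measurableSet_Ioc fun α _ => ?_
          rw [inner_self_eq_norm_sq_to_K]; norm_cast
      _ = ((∫ α in Set.Ioc (k : ℝ) ((k : ℝ) + 1), ‖f α‖ ^ 2 : ℝ) : ℂ) := integral_ofReal
      _ = _ := by rw [hIeq]
  refine ⟨f, ⟨⟨hfmeas, hK⟩, (m : ℝ) + 1, by positivity, ?_⟩, h0, ?_, ?_, ?_⟩
  · refine Filter.Eventually.of_forall fun α hα => h2 α ?_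
    linarith
  · refine Filter.Eventually.of_forall fun α hα => ?_
    have := h1 0 α (by simpa using hα.1) (by simpa using hα.2)
    simpa [extSec] using this
  · have h4 : ∀ᵐ α ∂(volume : Measure ℝ), α ≠ (m : ℝ) := by
      rw [ae_iff]
      simpa using measure_singleton (α := ℝ) (μ := volume) (m : ℝ)
    filter_upwards [h4] with α hα hge
    exact h2 α (lt_of_le_of_ne hge (Ne.symm hα))
  · refine Tendsto.congr' ?_ tendsto_const_nhds
    filter_upwards [eventually_ge_atTop m] with k hk
    exact (hval k hk).symm

end
end

section
/- (Totality of the images of the spaces K_m: the embedding R → H is onto a dense subspace.) For every f ∈ 𝒮 there exist m ∈ ℕ and g ∈ 𝒮 such that g(α) = 0 for almost every α ≤ m, g(α+1) = V_α(g(α)) for almost every α ≥ m, and ⟨f − g, f − g⟩ = 0 (i.e. f − g ∈ 𝒩). -/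
open MeasureTheory Filter Topology

noncomputable section

variable {H₀ : Type*} [NormedAddCommGroup H₀] [InnerProductSpace ℂ H₀] [CompleteSpace H₀]

/-- Totality of the images of the spaces `K_m`: every `f ∈ 𝒮` agrees, modulo `𝒩`, with a
stable section `g` vanishing (a.e.) on `(-∞, m]` and stable (a.e.) beyond `m`. -/
theorem stableSection_approx_by_window_supported
    (V : ℝ → H₀ →ₗᵢ[ℂ] H₀)
    (hV : ∀ u : ℝ → H₀, StronglyMeasurable u → StronglyMeasurable fun α => V α (u α))
    (f : ℝ → H₀) (hf : StableSection V f) :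
    ∃ (m : ℕ) (g : ℝ → H₀), StableSection V g ∧
      (∀ᵐ α ∂(volume : Measure ℝ), α ≤ (m : ℝ) → g α = 0) ∧
      (∀ᵐ α ∂(volume : Measure ℝ), (m : ℝ) ≤ α → g (α + 1) = V α (g α)) ∧
      Tendsto (fun k : ℕ => ∫ α in Set.Ioc (k : ℝ) ((k : ℝ) + 1),
          (inner ℂ ((f - g) α) ((f - g) α) : ℂ)) atTop (𝓝 0) ∧
      NullSection V (f - g) := by
  obtain ⟨⟨hfm, hfint⟩, α₀, hα₀pos, hstab⟩ := hf
  set m : ℕ := ⌈α₀⌉₊ with hm_def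
  have hmα₀ : α₀ ≤ (m : ℝ) := Nat.le_ceil α₀
  have hmpos : (0 : ℝ) < (m : ℝ) := by
    exact_mod_cast Nat.ceil_pos.mpr hα₀pos
  set g : ℝ → H₀ := Set.indicator (Set.Ioi (m : ℝ)) f with hg_def
  have hgm : StronglyMeasurable g := hfm.indicator measurableSet_Ioi
  have hg_of_le : ∀ α : ℝ, α ≤ (m : ℝ) → g α = 0 := by
    intro α hα
    exact Set.indicator_of_notMem (by simpa using not_lt.mpr hα) f
  have hg_of_lt : ∀ α : ℝ, (m : ℝ) < α → g α = f α := by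
    intro α hα
    exact Set.indicator_of_mem (by simpa using hα) f
  have hsub_le : ∀ α : ℝ, ‖f α - g α‖ ≤ ‖f α‖ := by
    intro α
    by_cases h : (m : ℝ) < α
    · rw [hg_of_lt α h]; simp
    · rw [hg_of_le α (not_lt.mp h)]; simp
  have hg_le : ∀ α : ℝ, ‖g α‖ ≤ ‖f α‖ := by
    intro α
    by_cases h : (m : ℝ) < α
    · rw [hg_of_lt α h]
    · rw [hg_of_le α (not_lt.mp h)]; simp
  have hne : ∀ᵐ α ∂(volume : Measure ℝ), α ≠ (m : ℝ) := by
    rw [ae_iff]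
    have : {α : ℝ | ¬ α ≠ (m : ℝ)} = {(m : ℝ)} := by ext x; simp
    rw [this]
    exact Real.volume_singleton
  -- local square integrability of g
  have hgloc : LocSqInt g := by
    refine ⟨hgm, fun K hK => ?_⟩
    refine Integrable.mono (hfint K hK) ?_ ?_
    · exact ((hgm.norm.pow 2).aestronglyMeasurable).restrict
    · refine Filter.Eventually.of_forall fun α => ?_
      simp only [norm_pow, norm_norm]
      exact pow_le_pow_left₀ (norm_nonneg _) (hg_le α) 2
  -- stability of g beyond m
  have hgstab : ∀ᵐ α ∂(volume : Measure ℝ), (m : ℝ) ≤ α → g (α + 1) = V α (g α) := by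
    filter_upwards [hstab, hne] with α hα hαne hge
    have hlt : (m : ℝ) < α := lt_of_le_of_ne hge (Ne.symm hαne)
    rw [hg_of_lt α hlt, hg_of_lt (α + 1) (by linarith)]
    exact hα (le_trans hmα₀ hlt.le)
  have hgS : StableSection V g :=
    ⟨hgloc, (m : ℝ), hmpos, hgstab⟩
  -- f - g vanishes beyond m a.e.
  have hdiff_zero : ∀ᵐ α ∂(volume : Measure ℝ), (m : ℝ) ≤ α → (f - g) α = 0 := by
    filter_upwards [hne] with α hαne hge
    have hlt : (m : ℝ) < α := lt_of_le_of_ne hge (Ne.symm hαne)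
    simp [Pi.sub_apply, hg_of_lt α hlt]
  -- f - g is a stable section
  have hdiffS : StableSection V (f - g) := by
    refine ⟨⟨hfm.sub hgm, fun K hK => ?_⟩, (m : ℝ), hmpos, ?_⟩
    · refine Integrable.mono (hfint K hK) ?_ ?_
      · exact (((hfm.sub hgm).norm.pow 2).aestronglyMeasurable).restrict
      · refine Filter.Eventually.of_forall fun α => ?_
        simp only [norm_pow, norm_norm, Pi.sub_apply]
        exact pow_le_pow_left₀ (norm_nonneg _) (hsub_le α) 2
    · filter_upwards [hdiff_zero, hne] with α h hαne hge
      have hlt : (m : ℝ) < α := lt_of_le_of_ne hge (Ne.symm hαne)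
      have h1 : (f - g) (α + 1) = 0 := by
        simp [Pi.sub_apply, hg_of_lt (α + 1) (by linarith)]
      rw [h1, h hge, map_zero]
  refine ⟨m, g, hgS, Filter.Eventually.of_forall hg_of_le, hgstab, ?_,
    hdiffS, (m : ℝ), hmpos, hdiff_zero⟩
  -- the integrals are eventually zero
  have hev : ∀ᶠ k : ℕ in atTop,
      (∫ α in Set.Ioc (k : ℝ) ((k : ℝ) + 1), (inner ℂ ((f - g) α) ((f - g) α) : ℂ)) = 0 := by
    filter_upwards [eventually_ge_atTop m] with k hk
    have : ∀ α ∈ Set.Ioc (k : ℝ) ((k : ℝ) + 1),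
        (inner ℂ ((f - g) α) ((f - g) α) : ℂ) = 0 := by
      intro α hα
      have hlt : (m : ℝ) < α := lt_of_le_of_lt (by exact_mod_cast hk) hα.1
      have : (f - g) α = 0 := by simp [Pi.sub_apply, hg_of_lt α hlt]
      rw [this]; simp
    rw [setIntegral_congr_fun measurableSet_Ioc this, integral_zero]
  exact Tendsto.congr' (hev.mono fun k hk => hk.symm) tendsto_const_nhds

end
end

section
/- (The representation operators are well defined on 𝒮.) Let t > 0 and let W : ℝ → (H₀ →ₗᵢ H₀) be a family of linear isometries of H₀ such that for every measurable u : ℝ → H₀ the function α ↦ W_α(u(α)) is measurable, and such that W_{β+1} ∘ V_β = V_{β+t} ∘ W_β for every β > 0. For f : ℝ → H₀ define (Φf)(α) := W_{α−t}(f(α−t)) if α > t and (Φf)(α) := 0 otherwise. Then for every f ∈ 𝒮 one has Φf ∈ 𝒮. -/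
open MeasureTheory Filter Topology

set_option maxHeartbeats 1000000
noncomputable section

variable {H₀ : Type*} [NormedAddCommGroup H₀] [InnerProductSpace ℂ H₀] [CompleteSpace H₀]

/-- The operator `Φ` of "left multiplication by a norm-one vector `x ∈ E_t`",
implemented via a family `W` of isometries: `(Φf)(α) = W_{α−t}(f(α−t))` for `α > t`
and `(Φf)(α) = 0` otherwise. -/
def Phi (t : ℝ) (W : ℝ → H₀ →ₗᵢ[ℂ] H₀) (f : ℝ → H₀) : ℝ → H₀ :=
  fun α => if t < α then W (α - t) (f (α - t)) else 0

/-- The representation operators are well defined on `𝒮`: if `W` intertwines `V` as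
`W_{β+1} ∘ V_β = V_{β+t} ∘ W_β` for `β > 0`, then `Φ` maps `𝒮` into `𝒮`. -/
theorem phi_maps_stable_to_stable
    (V : ℝ → H₀ →ₗᵢ[ℂ] H₀)
    (hV : ∀ u : ℝ → H₀, StronglyMeasurable u → StronglyMeasurable fun α => V α (u α))
    (t : ℝ) (ht : 0 < t)
    (W : ℝ → H₀ →ₗᵢ[ℂ] H₀)
    (hW : ∀ u : ℝ → H₀, StronglyMeasurable u → StronglyMeasurable fun α => W α (u α))
    (hWV : ∀ β : ℝ, 0 < β → ∀ v : H₀, W (β + 1) (V β v) = V (β + t) (W β v)) :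
    ∀ f : ℝ → H₀, StableSection V f → StableSection V (Phi t W f) := by
  rintro f ⟨⟨hfm, hfint⟩, α₀, hα₀, hae⟩
  have hT : MeasurePreserving (fun α : ℝ => α - t) volume volume :=
    measurePreserving_sub_right volume t
  have hTemb : MeasurableEmbedding (fun α : ℝ => α - t) :=
    (MeasurableEquiv.subRight t).measurableEmbedding
  have hgm : StronglyMeasurable fun α => W α (f α) := hW f hfm
  have hshift : StronglyMeasurable fun α : ℝ => W (α - t) (f (α - t)) :=
    hgm.comp_measurable (measurable_id.sub_const t)
  have hPhieq : Phi t W f =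
      Set.indicator (Set.Ioi t) (fun α => W (α - t) (f (α - t))) := by
    funext α
    simp [Phi, Set.indicator_apply, Set.mem_Ioi]
  have hPhim : StronglyMeasurable (Phi t W f) := by
    rw [hPhieq]; exact hshift.indicator measurableSet_Ioi
  refine ⟨⟨hPhim, ?_⟩, α₀ + t, by linarith, ?_⟩
  · intro K hK
    have hK' : IsCompact ((fun α : ℝ => α - t) '' K) :=
      hK.image (continuous_id.sub continuous_const)
    have h1 : IntegrableOn (fun α => ‖f α‖ ^ 2) ((fun α : ℝ => α - t) '' K) volume :=
      hfint _ hK'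
    have h2 : IntegrableOn (fun α : ℝ => ‖f (α - t)‖ ^ 2) K volume :=
      (hT.integrableOn_image (f := fun α => ‖f α‖ ^ 2) (s := K) hTemb).mp h1
    refine h2.mono' ((hPhim.norm.pow 2).aestronglyMeasurable.restrict) ?_
    refine Filter.Eventually.of_forall fun α => ?_
    have hb : ‖Phi t W f α‖ ≤ ‖f (α - t)‖ := by
      by_cases h : t < α
      · simp [Phi, h, (W (α - t)).norm_map]
      · simp [Phi, h, norm_nonneg]
    calc ‖‖Phi t W f α‖ ^ 2‖ = ‖Phi t W f α‖ ^ 2 := by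
          rw [Real.norm_of_nonneg (by positivity)]
      _ ≤ ‖f (α - t)‖ ^ 2 := by
          exact pow_le_pow_left₀ (norm_nonneg _) hb 2
  · have hae' : ∀ᵐ α ∂(volume : Measure ℝ),
        α₀ ≤ α - t → f (α - t + 1) = V (α - t) (f (α - t)) :=
      hT.quasiMeasurePreserving.ae
        (p := fun β => α₀ ≤ β → f (β + 1) = V β (f β)) hae
    filter_upwards [hae'] with α hα hα'
    have htα : t < α := by linarith
    have htα1 : t < α + 1 := by linarith
    have hst : α₀ ≤ α - t := by linarith
    have hβ : (0 : ℝ) < α - t := by linarith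
    have key : α + 1 - t = (α - t) + 1 := by ring
    have key2 : (α - t) + t = α := by ring
    calc Phi t W f (α + 1) = W (α + 1 - t) (f (α + 1 - t)) := by simp [Phi, htα1]
      _ = W ((α - t) + 1) (f ((α - t) + 1)) := by rw [key]
      _ = W ((α - t) + 1) (V (α - t) (f (α - t))) := by rw [hα hst]
      _ = V ((α - t) + t) (W (α - t) (f (α - t))) := hWV _ hβ _
      _ = V α (Phi t W f α) := by rw [key2]; simp [Phi, htα]

end
end

section
/- (The representation operators are isometric for the semi-inner product.) Let t > 0 and let W : ℝ → (H₀ →ₗᵢ H₀) be a family of linear isometries of H₀ such that for every measurable u : ℝ → H₀ the function α ↦ W_α(u(α)) is measurable, and such that W_{β+1} ∘ V_β = V_{β+t} ∘ W_β for every β > 0. For f : ℝ → H₀ define (Φf)(α) := W_{α−t}(f(α−t)) if α > t and (Φf)(α) := 0 otherwise. Then for all f, g ∈ 𝒮 one has ⟨Φf, Φg⟩ = ⟨f, g⟩; in particular ⟨Φf, Φf⟩ = ⟨f,f⟩, and Φ maps 𝒩 into 𝒩. -/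
open MeasureTheory Filter Topology

noncomputable section

variable {H₀ : Type*} [NormedAddCommGroup H₀] [InnerProductSpace ℂ H₀] [CompleteSpace H₀]

lemma ae_sub' (t : ℝ) {P : ℝ → Prop} (h : ∀ᵐ α ∂(volume : Measure ℝ), P α) :
    ∀ᵐ α ∂(volume : Measure ℝ), P (α - t) :=
  (measurePreserving_sub_right volume t).quasiMeasurePreserving.ae h

lemma inner_integrableOn' {f g : ℝ → H₀}
    (hf : StronglyMeasurable f ∧ ∀ K : Set ℝ, IsCompact K →
      IntegrableOn (fun α => ‖f α‖ ^ 2) K volume)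
    (hg : StronglyMeasurable g ∧ ∀ K : Set ℝ, IsCompact K →
      IntegrableOn (fun α => ‖g α‖ ^ 2) K volume)
    {K : Set ℝ} (hK : IsCompact K) :
    IntegrableOn (fun α => (inner ℂ (f α) (g α) : ℂ)) K volume := by
  refine ((hf.2 K hK).add (hg.2 K hK)).mono'
    ((hf.1.inner hg.1).aestronglyMeasurable.restrict) ?_
  filter_upwards with a
  calc ‖(inner ℂ (f a) (g a) : ℂ)‖ ≤ ‖f a‖ * ‖g a‖ := norm_inner_le_norm _ _
    _ ≤ ‖f a‖ ^ 2 + ‖g a‖ ^ 2 := by nlinarith [sq_nonneg (‖f a‖ - ‖g a‖)]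

lemma integral_window_const' {h : ℝ → ℂ}
    (hint : ∀ a b : ℝ, IntervalIntegrable h volume a b)
    {α₁ : ℝ} (hper : ∀ᵐ α ∂(volume : Measure ℝ), α₁ ≤ α → h (α + 1) = h α)
    {s₁ s₂ : ℝ} (h1 : α₁ ≤ s₁) (h12 : s₁ ≤ s₂) :
    ∫ α in Set.Ioc s₁ (s₁ + 1), h α = ∫ α in Set.Ioc s₂ (s₂ + 1), h α := by
  have e1 : (∫ x in s₁..s₂, h x) + ∫ x in s₂..(s₂+1), h x = ∫ x in s₁..(s₂+1), h x :=
    intervalIntegral.integral_add_adjacent_intervals (hint _ _) (hint _ _)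
  have e2 : (∫ x in s₁..(s₁+1), h x) + ∫ x in (s₁+1)..(s₂+1), h x = ∫ x in s₁..(s₂+1), h x :=
    intervalIntegral.integral_add_adjacent_intervals (hint _ _) (hint _ _)
  have e3 : (∫ x in (s₁+1)..(s₂+1), h x) = ∫ x in s₁..s₂, h (x + 1) :=
    (intervalIntegral.integral_comp_add_right h 1).symm
  have e4 : (∫ x in s₁..s₂, h (x + 1)) = ∫ x in s₁..s₂, h x := by
    apply intervalIntegral.integral_congr_ae
    rw [Set.uIoc_of_le h12]
    filter_upwards [hper] with α hα hmem
    exact hα (le_trans h1 (le_of_lt hmem.1))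
  rw [← intervalIntegral.integral_of_le (by linarith : s₁ ≤ s₁+1),
      ← intervalIntegral.integral_of_le (by linarith : s₂ ≤ s₂+1)]
  linear_combination e2 - e1 - e3 - e4

lemma locSqInt_comp_sub' {f : ℝ → H₀}
    (hf : ∀ K : Set ℝ, IsCompact K → IntegrableOn (fun α => ‖f α‖ ^ 2) K volume)
    (t : ℝ) {K : Set ℝ} (hK : IsCompact K) :
    IntegrableOn (fun α => ‖f (α - t)‖ ^ 2) K volume := by
  set K' := (fun x : ℝ => x - t) '' K with hK'
  have hK'c : IsCompact K' := hK.image (continuous_id.sub continuous_const)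
  have h1 : Integrable (K'.indicator (fun β => ‖f β‖ ^ 2)) volume :=
    (integrable_indicator_iff hK'c.measurableSet).mpr (hf K' hK'c)
  have h2 : Integrable (fun α => K'.indicator (fun β => ‖f β‖ ^ 2) (α - t)) volume :=
    h1.comp_sub_right t
  have h3 : (fun α => K'.indicator (fun β => ‖f β‖ ^ 2) (α - t))
      = K.indicator (fun α => ‖f (α - t)‖ ^ 2) := by
    funext α
    by_cases hα : α ∈ K
    · rw [Set.indicator_of_mem hα, Set.indicator_of_mem (show α - t ∈ K' from ⟨α, hα, rfl⟩)]
    · rw [Set.indicator_of_notMem hα, Set.indicator_of_notMem]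
      rintro ⟨x, hx, hxe⟩
      have hxe' : x - t = α - t := hxe
      have : x = α := by linarith
      exact hα (this ▸ hx)
  exact (integrable_indicator_iff hK.measurableSet).mp (h3 ▸ h2)


/-- The representation operators are isometric for the semi-inner product:
`⟨Φf, Φg⟩ = ⟨f, g⟩` for all `f, g ∈ 𝒮` (in particular `⟨Φf,Φf⟩ = ⟨f,f⟩`), and `Φ`
maps `𝒩` into `𝒩`. -/
theorem phi_isometric_for_sinn
    (V : ℝ → H₀ →ₗᵢ[ℂ] H₀)
    (hV : ∀ u : ℝ → H₀, StronglyMeasurable u → StronglyMeasurable fun α => V α (u α))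
    (t : ℝ) (ht : 0 < t)
    (W : ℝ → H₀ →ₗᵢ[ℂ] H₀)
    (hW : ∀ u : ℝ → H₀, StronglyMeasurable u → StronglyMeasurable fun α => W α (u α))
    (hWV : ∀ β : ℝ, 0 < β → ∀ v : H₀, W (β + 1) (V β v) = V (β + t) (W β v)) :
    (∀ f g : ℝ → H₀, StableSection V f → StableSection V g → ∀ c : ℂ,
        Tendsto (fun m : ℕ => ∫ α in Set.Ioc (m : ℝ) ((m : ℝ) + 1),
            (inner ℂ (f α) (g α) : ℂ)) atTop (𝓝 c) →
        Tendsto (fun m : ℕ => ∫ α in Set.Ioc (m : ℝ) ((m : ℝ) + 1),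
            (inner ℂ (Phi t W f α) (Phi t W g α) : ℂ)) atTop (𝓝 c)) ∧
    (∀ f : ℝ → H₀, NullSection V f → NullSection V (Phi t W f)) := by
  -- a key fact used in both parts: `Phi t W f` of a stable section is a stable section
  have hstable : ∀ f : ℝ → H₀, StableSection V f → StableSection V (Phi t W f) := by
    rintro f ⟨⟨hfm, hfint⟩, α₀, hα₀, hstab⟩
    have hmeas : StronglyMeasurable (Phi t W f) := by
      have h1 : StronglyMeasurable (fun α : ℝ => W (α - t) (f (α - t))) :=
        (hW f hfm).comp_measurable (measurable_id.sub_const t)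
      have h2 : Phi t W f = (Set.Ioi t).indicator (fun α => W (α - t) (f (α - t))) := by
        funext α
        by_cases hα : t < α
        · rw [Set.indicator_of_mem (Set.mem_Ioi.mpr hα)]; simp [Phi, hα]
        · rw [Set.indicator_of_notMem (by simpa using hα)]; simp [Phi, hα]
      rw [h2]; exact h1.indicator measurableSet_Ioi
    refine ⟨⟨hmeas, fun K hK => ?_⟩, α₀ + t + 1, by linarith, ?_⟩
    · have hb := locSqInt_comp_sub' hfint t hK
      have hsm : StronglyMeasurable (fun α => ‖Phi t W f α‖ ^ 2) := by
        simp_rw [pow_two]; exact hmeas.norm.mul hmeas.norm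
      refine hb.mono' hsm.aestronglyMeasurable.restrict ?_
      filter_upwards with α
      rw [Real.norm_eq_abs, abs_of_nonneg (by positivity)]
      unfold Phi
      split_ifs with hα
      · rw [LinearIsometry.norm_map]
      · simpa using sq_nonneg ‖f (α - t)‖
    · have hstab' := ae_sub' t hstab
      filter_upwards [hstab'] with α hα hge
      have h1 : t < α := by linarith
      have h2 : t < α + 1 := by linarith
      have h3 : (0:ℝ) < α - t := by linarith
      show Phi t W f (α + 1) = V α (Phi t W f α)
      simp only [Phi, if_pos h1, if_pos h2]
      have e : α + 1 - t = (α - t) + 1 := by ring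
      rw [e, hα (by linarith), hWV (α - t) h3]
      have e2 : α - t + t = α := by ring
      rw [e2]
  constructor
  · rintro f g hf hg c hc
    obtain ⟨⟨hfm, hfint⟩, αf, hαf, hfs⟩ := hf
    obtain ⟨⟨hgm, hgint⟩, αg, hαg, hgs⟩ := hg
    set h : ℝ → ℂ := fun α => (inner ℂ (f α) (g α) : ℂ) with hh
    have hint : ∀ a b : ℝ, IntervalIntegrable h volume a b := by
      intro a b
      exact ((inner_integrableOn' ⟨hfm, hfint⟩ ⟨hgm, hgint⟩
        isCompact_uIcc).mono_set Set.Icc_subset_uIcc).intervalIntegrable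
    set α₁ := max αf αg with hα₁
    have hper : ∀ᵐ α ∂(volume : Measure ℝ), α₁ ≤ α → h (α + 1) = h α := by
      filter_upwards [hfs, hgs] with α h1 h2 hα
      show (inner ℂ (f (α + 1)) (g (α + 1)) : ℂ) = inner ℂ (f α) (g α)
      rw [h1 (le_trans (le_max_left _ _) hα), h2 (le_trans (le_max_right _ _) hα),
        LinearIsometry.inner_map_map]
    have key : ∀ᶠ m : ℕ in atTop,
        (∫ α in Set.Ioc (m : ℝ) ((m : ℝ) + 1), (inner ℂ (Phi t W f α) (Phi t W g α) : ℂ))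
          = ∫ α in Set.Ioc (m : ℝ) ((m : ℝ) + 1), h α := by
      obtain ⟨N, hN⟩ := exists_nat_ge (α₁ + t)
      filter_upwards [eventually_ge_atTop N] with m hm
      have hmt : α₁ + t ≤ (m : ℝ) := le_trans hN (Nat.cast_le.mpr hm)
      have hα₁pos : 0 < α₁ := lt_of_lt_of_le hαf (le_max_left _ _)
      have htm : t < (m : ℝ) := by linarith
      have step1 : (∫ α in Set.Ioc (m : ℝ) ((m : ℝ) + 1),
          (inner ℂ (Phi t W f α) (Phi t W g α) : ℂ))
          = ∫ α in Set.Ioc (m : ℝ) ((m : ℝ) + 1), h (α - t) := by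
        apply setIntegral_congr_fun measurableSet_Ioc
        intro α hα
        have hαt : t < α := lt_trans htm hα.1
        show (inner ℂ (Phi t W f α) (Phi t W g α) : ℂ) = inner ℂ (f (α - t)) (g (α - t))
        simp only [Phi, if_pos hαt, LinearIsometry.inner_map_map]
      have step2 : (∫ α in Set.Ioc (m : ℝ) ((m : ℝ) + 1), h (α - t))
          = ∫ α in Set.Ioc ((m : ℝ) - t) ((m : ℝ) - t + 1), h α := by
        rw [← intervalIntegral.integral_of_le (by linarith : (m:ℝ) ≤ (m:ℝ) + 1),
          ← intervalIntegral.integral_of_le (by linarith : (m:ℝ) - t ≤ (m:ℝ) - t + 1),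
          intervalIntegral.integral_comp_sub_right h t]
        congr 1
        ring
      rw [step1, step2]
      exact integral_window_const' hint hper (by linarith) (by linarith)
    exact hc.congr' (key.mono fun m hm => hm.symm)
  · rintro f ⟨hfS, α₂, hα₂, hzero⟩
    refine ⟨hstable f hfS, α₂ + t + 1, by linarith, ?_⟩
    filter_upwards [ae_sub' t hzero] with α hα hge
    have h1 : t < α := by linarith
    simp only [Phi, if_pos h1, hα (by linarith), map_zero]

end
end

section
/- (The representation operators iterate associatively: semigroup property.) Let t, s > 0, let W, W' : ℝ → (H₀ →ₗᵢ H₀) be families of linear isometries of H₀ satisfying W_{β+1} ∘ V_β = V_{β+t} ∘ W_β and W'_{β+1} ∘ V_β = V_{β+s} ∘ W'_β for every β > 0. Define Φ_t^W by (Φ_t^W f)(α) := W_{α−t}(f(α−t)) if α > t and 0 otherwise, and similarly Φ_s^{W'}. Set W''_β := W_{β+s} ∘ W'_β for β ∈ ℝ. Then each W''_β is a linear isometry, the family W'' satisfies W''_{β+1} ∘ V_β = V_{β+t+s} ∘ W''_β for every β > 0, and for every f : ℝ → H₀ one has Φ_t^W (Φ_s^{W'} f) = Φ_{t+s}^{W''}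 f as functions ℝ → H₀. -/
open MeasureTheory Filter Topology

noncomputable section

variable {H₀ : Type*} [NormedAddCommGroup H₀] [InnerProductSpace ℂ H₀] [CompleteSpace H₀]

/-- The representation operators iterate associatively (semigroup property):
with `W''_β := W_{β+s} ∘ W'_β`, each `W''_β` is an isometry, `W''` satisfies the same
intertwining relation with parameter `t+s`, and `Φ_t^W ∘ Φ_s^{W'} = Φ_{t+s}^{W''}`. -/
theorem phi_comp_phi_eq_phi_add
    (V : ℝ → H₀ →ₗᵢ[ℂ] H₀)
    (t s : ℝ) (ht : 0 < t) (hs : 0 < s)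
    (W W' : ℝ → H₀ →ₗᵢ[ℂ] H₀)
    (hWV : ∀ β : ℝ, 0 < β → ∀ v : H₀, W (β + 1) (V β v) = V (β + t) (W β v))
    (hW'V : ∀ β : ℝ, 0 < β → ∀ v : H₀, W' (β + 1) (V β v) = V (β + s) (W' β v)) :
    (∀ (β : ℝ) (v : H₀), ‖((W (β + s)).comp (W' β)) v‖ = ‖v‖) ∧
    (∀ β : ℝ, 0 < β → ∀ v : H₀,
        ((W (β + 1 + s)).comp (W' (β + 1))) (V β v)
          = V (β + (t + s)) (((W (β + s)).comp (W' β)) v)) ∧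
    (∀ f : ℝ → H₀,
        Phi t W (Phi s W' f) = Phi (t + s) (fun β => (W (β + s)).comp (W' β)) f) := by
  refine ⟨fun β v => by simp, fun β hβ v => ?_, fun f => ?_⟩
  · have h1 : W' (β + 1) (V β v) = V (β + s) (W' β v) := hW'V β hβ v
    have h2 : W ((β + s) + 1) (V (β + s) (W' β v)) = V ((β + s) + t) (W (β + s) (W' β v)) :=
      hWV (β + s) (by linarith) _
    simp only [LinearIsometry.coe_comp, Function.comp_apply]
    rw [h1]
    rw [show β + 1 + s = (β + s) + 1 by ring, h2, show β + s + t = β + (t + s) by ring]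
  · funext α
    simp only [Phi, LinearIsometry.coe_comp, Function.comp_apply]
    by_cases h : t + s < α
    · rw [if_pos h, if_pos (by linarith), if_pos (by linarith : s < α - t)]
      have : α - t - s = α - (t + s) := by ring
      rw [this, show α - (t + s) + s = α - t by ring]
    · rw [if_neg h]
      by_cases h2 : t < α
      · rw [if_pos h2, if_neg (by intro hc; apply h; linarith), map_zero]
      · rw [if_neg h2]

end
end

section
/- (Compatibility of the embeddings K_m → H with the inductive system K_m → K_{m+n}.) Let m, n ∈ ℕ and let f₀ : ℝ → H₀ be strongly measurable with f₀(α) = 0 for almost every α ∉ (m, m+1] and ∫_m^{m+1} ‖f₀(α)‖² dα < ∞. Suppose f ∈ 𝒮 satisfies f(α) = 0 for α ≤ m, f(α) = f₀(α) for almost every α ∈ (m, m+1], and f(α+1) = V_α(f(α)) for almost every α ≥ m; and suppose g ∈ 𝒮 satisfies g(α) = 0 for α ≤ m+n, g(α) = f(α) for almost every α ∈ (m+n, m+n+1], and g(α+1) = V_α(g(α)) for almost every α ≥ m+n. Then ⟨f − g, f − g⟩ = 0, i.e. f − g ∈ 𝒩. -/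
open MeasureTheory Filter Topology

noncomputable section

variable {H₀ : Type*} [NormedAddCommGroup H₀] [InnerProductSpace ℂ H₀] [CompleteSpace H₀]

/-- Shifting an a.e. property on `ℝ`. -/
lemma ae_shift {p : ℝ → Prop} (c : ℝ) (h : ∀ᵐ α ∂(volume : Measure ℝ), p α) :
    ∀ᵐ α ∂(volume : Measure ℝ), p (α + c) :=
  ((measurePreserving_add_right (volume : Measure ℝ) c).quasiMeasurePreserving.tendsto_ae).eventually h

/-- Compatibility of the embeddings `K_m → H` with the inductive system `K_m → K_{m+n}`:
the stable extension of a window section `f₀` on `(m, m+1]` and the stable extension of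
its image in the window `(m+n, m+n+1]` agree modulo `𝒩`. -/
theorem window_embeddings_compatible
    (V : ℝ → H₀ →ₗᵢ[ℂ] H₀)
    (hV : ∀ u : ℝ → H₀, StronglyMeasurable u → StronglyMeasurable fun α => V α (u α))
    (m n : ℕ) (f₀ : ℝ → H₀) (hmeas : StronglyMeasurable f₀)
    (hsupp : ∀ᵐ α ∂(volume : Measure ℝ), α ∉ Set.Ioc (m : ℝ) ((m : ℝ) + 1) → f₀ α = 0)
    (hint : IntegrableOn (fun α => ‖f₀ α‖ ^ 2) (Set.Ioc (m : ℝ) ((m : ℝ) + 1)) volume)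
    (f : ℝ → H₀) (hf : StableSection V f)
    (hf0 : ∀ α : ℝ, α ≤ (m : ℝ) → f α = 0)
    (hfw : ∀ᵐ α ∂(volume : Measure ℝ), α ∈ Set.Ioc (m : ℝ) ((m : ℝ) + 1) → f α = f₀ α)
    (hfs : ∀ᵐ α ∂(volume : Measure ℝ), (m : ℝ) ≤ α → f (α + 1) = V α (f α))
    (g : ℝ → H₀) (hg : StableSection V g)
    (hg0 : ∀ α : ℝ, α ≤ (m : ℝ) + (n : ℝ) → g α = 0)
    (hgw : ∀ᵐ α ∂(volume : Measure ℝ),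
        α ∈ Set.Ioc ((m : ℝ) + (n : ℝ)) ((m : ℝ) + (n : ℝ) + 1) → g α = f α)
    (hgs : ∀ᵐ α ∂(volume : Measure ℝ), (m : ℝ) + (n : ℝ) ≤ α → g (α + 1) = V α (g α)) :
    Tendsto (fun k : ℕ => ∫ α in Set.Ioc (k : ℝ) ((k : ℝ) + 1),
        (inner ℂ ((f - g) α) ((f - g) α) : ℂ)) atTop (𝓝 0) ∧
    NullSection V (f - g) := by
  set c : ℝ := (m : ℝ) + (n : ℝ) with hc
  -- Step 1: for every k, f = g a.e. on (c + k, c + k + 1]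
  have key : ∀ k : ℕ, ∀ᵐ α ∂(volume : Measure ℝ),
      α ∈ Set.Ioc (c + k) (c + k + 1) → f α = g α := by
    intro k
    induction k with
    | zero =>
      filter_upwards [hgw] with α hα hmem
      exact (hα (by simpa using hmem)).symm
    | succ k ih =>
      have hfs' := ae_shift (-1) hfs
      have hgs' := ae_shift (-1) hgs
      have ih' := ae_shift (-1) ih
      filter_upwards [hfs', hgs', ih'] with α hA hB hC hmem
      have h1 : c + k < α - 1 := by
        have := hmem.1; push_cast at this ⊢; linarith
      have h2 : α - 1 ≤ c + k + 1 := by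
        have := hmem.2; push_cast at this ⊢; linarith
      have hmα : (m : ℝ) ≤ α + -1 := by
        have : (m : ℝ) ≤ c := by rw [hc]; linarith [Nat.cast_nonneg (α := ℝ) n]
        linarith
      have hcα : c ≤ α + -1 := by
        have : (0:ℝ) ≤ (k:ℕ) := by positivity
        linarith
      have hCα : f (α + -1) = g (α + -1) :=
        hC (Set.mem_Ioc.mpr ⟨by linarith, by linarith⟩)
      have e1 : f (α + -1 + 1) = V (α + -1) (f (α + -1)) := hA hmα
      have e2 : g (α + -1 + 1) = V (α + -1) (g (α + -1)) := hB hcα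
      have : α + -1 + 1 = α := by ring
      rw [this] at e1 e2
      rw [e1, e2, hCα]
  -- Step 2: f = g a.e. on (c, ∞)
  have keyAll : ∀ᵐ α ∂(volume : Measure ℝ), c < α → f α = g α := by
    have := (ae_all_iff.mpr key)
    filter_upwards [this] with α hα hcα
    set k : ℕ := ⌈α - c⌉₊ - 1 with hk
    have hpos : 0 < α - c := by linarith
    have hceil : 1 ≤ ⌈α - c⌉₊ := Nat.one_le_ceil_iff.mpr hpos
    have hk1 : (k : ℕ) + 1 = ⌈α - c⌉₊ := by omega
    apply hα k
    constructor
    · have : (k : ℝ) < α - c := by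
        have := Nat.lt_ceil.mp (by omega : k < ⌈α - c⌉₊)
        exact this
      linarith
    · have h2 : α - c ≤ ((k : ℕ) + 1 : ℕ) := by
        rw [hk1]; exact Nat.le_ceil _
      push_cast at h2
      linarith
  -- Equality statement used throughout
  have hdiff : ∀ᵐ α ∂(volume : Measure ℝ), c + 1 ≤ α → (f - g) α = 0 := by
    filter_upwards [keyAll] with α hα h
    have : f α = g α := hα (by linarith)
    simp [this]
  -- LocSqInt (f - g)
  have hsm : StronglyMeasurable (f - g) := hf.1.1.sub hg.1.1
  have hloc : LocSqInt (f - g) := by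
    refine ⟨hsm, fun K hK => ?_⟩
    have hfK := hf.1.2 K hK
    have hgK := hg.1.2 K hK
    have hbound : IntegrableOn (fun α => 2 * ‖f α‖ ^ 2 + 2 * ‖g α‖ ^ 2) K volume :=
      (hfK.const_mul 2).add (hgK.const_mul 2)
    refine Integrable.mono' hbound ?_ ?_
    · exact ((hsm.norm.pow 2)).aestronglyMeasurable
    · refine Filter.Eventually.of_forall fun α => ?_
      have h1 : ‖f α - g α‖ ≤ ‖f α‖ + ‖g α‖ := norm_sub_le _ _
      have h3 : ‖(f - g) α‖ ^ 2 ≤ 2 * ‖f α‖ ^ 2 + 2 * ‖g α‖ ^ 2 := by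
        simp only [Pi.sub_apply]
        nlinarith [norm_nonneg (f α), norm_nonneg (g α), norm_nonneg (f α - g α),
          sq_nonneg (‖f α‖ - ‖g α‖)]
      calc ‖‖(f - g) α‖ ^ 2‖ = ‖(f - g) α‖ ^ 2 := by
            rw [Real.norm_eq_abs, abs_of_nonneg (sq_nonneg _)]
        _ ≤ _ := h3
  -- Stability of f - g
  have hstab : StableSection V (f - g) := by
    refine ⟨hloc, c + 1, by positivity, ?_⟩
    filter_upwards [hdiff, ae_shift 1 hdiff] with α h1 h2 hα
    have e1 : (f - g) α = 0 := h1 hα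
    have e2 : (f - g) (α + 1) = 0 := h2 (by linarith)
    rw [e1, e2, map_zero]
  constructor
  · -- Tendsto: the integrals are eventually 0
    have hev : ∀ᶠ k : ℕ in atTop,
        (∫ α in Set.Ioc (k : ℝ) ((k : ℝ) + 1), (inner ℂ ((f - g) α) ((f - g) α) : ℂ)) = 0 := by
      filter_upwards [eventually_ge_atTop (m + n + 1)] with k hk
      have hkc : c + 1 ≤ (k : ℝ) := by
        have : ((m + n + 1 : ℕ) : ℝ) ≤ (k : ℝ) := by exact_mod_cast hk
        push_cast at this
        simp [hc]; linarith
      apply integral_eq_zero_of_ae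
      filter_upwards [ae_restrict_of_ae hdiff, ae_restrict_mem measurableSet_Ioc]
        with α hα hmem
      have : (f - g) α = 0 := hα (by have := hmem.1; linarith)
      simp [this]
    exact Tendsto.congr' (hev.mono fun k h => h.symm) tendsto_const_nhds
  · exact ⟨hstab, c + 1, by positivity, hdiff⟩

end
end
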